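/- Let f : ℝ → ℝ be continuously differentiable, let ε ∈ ℝ, and let g : ℝ → ℂ be a continuously differentiable solution of the generalised Riccati equation g'(t) − i·g(t)² − 2i·f(t)·g(t) + i·ε² = 0 for all t ∈ ℝ. Define R(t) = exp(−i·∫₀ᵗ (f(τ)+g(τ)) dτ) and S(t) = ∫₀ᵗ R(τ)⁻² dτ, and let U(t) be the 2×2 complex matrix with entries U₁₁(t) = R(t)·(1 + i·g(0)·S(t)), U₁₂(t) = −i·ε·R(t)·S(t), U₂₁(t) = −i·ε·conj(R(t))·conj(S(t)), U₂₂(t) = conj(R(t))·(1 − i·conj(g(0))·conj(S(t))). Then for every Φ₀ ∈ ℂ², the function Φ(t) = U(t)·Φ₀ satisfies Φ(0) = Φ₀ and the Schrödinger equation i·Φ'(t) = (ε·σ₁ + f(t)·σ₃)·Φ(t) for all t ∈ ℝ. -/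

import Mathlib

open Matrix

noncomputable section

lemma myHasDerivAt_pi {ι : Type*} [Fintype ι] {Φ : ℝ → ι → ℂ} {v : ι → ℂ} {t : ℝ}
    (h : ∀ i, HasDerivAt (fun s => Φ s i) (v i) t) : HasDerivAt Φ v t := by
  rw [hasDerivAt_iff_hasFDerivAt]
  have := hasFDerivAt_pi (φ := fun i s => Φ s i)
    (φ' := fun i => ContinuousLinearMap.smulRight (1 : ℝ →L[ℝ] ℝ) (v i))
    |>.mpr (fun i => (h i).hasFDerivAt)
  exact (hasDerivAt_iff_hasFDerivAt).mp (hasDerivAt_pi.mpr h)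

lemma aux_zero_forward {E : Type*} [NormedAddCommGroup E] [NormedSpace ℝ E]
    (x x' : ℝ → E) (K : ℝ → ℝ) (hK : Continuous K)
    (hx : ∀ t, HasDerivAt x (x' t) t)
    (hb : ∀ t, ‖x' t‖ ≤ K t * ‖x t‖) (h0 : x 0 = 0) :
    ∀ t ≥ (0:ℝ), x t = 0 := by
  intro b hb0
  obtain ⟨C, hC⟩ := isCompact_Icc.exists_bound_of_continuousOn
    (s := Set.Icc (0:ℝ) b) hK.continuousOn
  have key := norm_le_gronwallBound_of_norm_deriv_right_le (f := x) (f' := x')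
    (δ := 0) (K := C) (ε := 0) (a := 0) (b := b)
    (fun s _ => (hx s).continuousAt.continuousWithinAt)
    (fun s _ => (hx s).hasDerivWithinAt)
    (by simp [h0])
    (fun s hs => by
      calc ‖x' s‖ ≤ K s * ‖x s‖ := hb s
        _ ≤ C * ‖x s‖ + 0 := by
            have h1 : K s ≤ C := (le_abs_self _).trans
              ((Real.norm_eq_abs (K s)) ▸ hC s (Set.mem_Icc.mpr ⟨hs.1, le_of_lt hs.2⟩))
            nlinarith [norm_nonneg (x s)])
  have := key b (Set.mem_Icc.mpr ⟨hb0, le_refl b⟩)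
  rw [gronwallBound_ε0_δ0] at this
  simpa using le_antisymm this (norm_nonneg _)

lemma aux_zero {E : Type*} [NormedAddCommGroup E] [NormedSpace ℝ E]
    (x x' : ℝ → E) (K : ℝ → ℝ) (hK : Continuous K)
    (hx : ∀ t, HasDerivAt x (x' t) t)
    (hb : ∀ t, ‖x' t‖ ≤ K t * ‖x t‖) (h0 : x 0 = 0) :
    ∀ t, x t = 0 := by
  intro t
  rcases le_or_gt 0 t with h | h
  · exact aux_zero_forward x x' K hK hx hb h0 t h
  · have hneg : ∀ s ≥ (0:ℝ), x (-s) = 0 := by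
      apply aux_zero_forward (fun s => x (-s)) (fun s => (-1 : ℝ) • x' (-s))
        (fun s => K (-s)) (hK.comp continuous_neg)
      · intro s
        simpa [Function.comp_def] using (hx (-s)).scomp s (hasDerivAt_neg s)
      · intro s
        simpa [norm_smul] using hb (-s)
      · simpa using h0
    have := hneg (-t) (by linarith)
    simpa using this

theorem schrodinger_solution_via_riccati
    (f : ℝ → ℝ) (hf : ContDiff ℝ 1 f) (ε : ℝ)
    (g : ℝ → ℂ) (hg : ContDiff ℝ 1 g)
    (hric : ∀ t : ℝ,
      deriv g t - Complex.I * (g t) ^ 2 - 2 * Complex.I * (f t : ℂ) * g t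
        + Complex.I * (ε : ℂ) ^ 2 = 0)
    (R S : ℝ → ℂ)
    (hR : ∀ t : ℝ, R t = Complex.exp (-Complex.I * ∫ τ in (0:ℝ)..t, ((f τ : ℂ) + g τ)))
    (hS : ∀ t : ℝ, S t = ∫ τ in (0:ℝ)..t, ((R τ) ^ 2)⁻¹)
    (U : ℝ → Matrix (Fin 2) (Fin 2) ℂ)
    (hU : ∀ t : ℝ, U t =
      !![R t * (1 + Complex.I * g 0 * S t),
         -Complex.I * (ε : ℂ) * R t * S t;
         -Complex.I * (ε : ℂ) * (starRingEnd ℂ) (R t) * (starRingEnd ℂ) (S t),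
         (starRingEnd ℂ) (R t) * (1 - Complex.I * (starRingEnd ℂ) (g 0) * (starRingEnd ℂ) (S t))])
    (Φ₀ : Fin 2 → ℂ) (Φ : ℝ → Fin 2 → ℂ)
    (hΦ : ∀ t : ℝ, Φ t = (U t).mulVec Φ₀) :
    Φ 0 = Φ₀ ∧
    ∀ t : ℝ, HasDerivAt Φ
      ((-Complex.I) • (((ε : ℂ) • (!![0, 1; 1, 0] : Matrix (Fin 2) (Fin 2) ℂ)
        + (f t : ℂ) • (!![1, 0; 0, -1] : Matrix (Fin 2) (Fin 2) ℂ)).mulVec (Φ t))) t := by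
  have hfc : Continuous f := hf.continuous
  have hgc : Continuous g := hg.continuous
  have hdg : ∀ t, HasDerivAt g (deriv g t) t := fun t =>
    ((hg.differentiable one_ne_zero) t).hasDerivAt
  have hric' : ∀ t, deriv g t = Complex.I * g t ^ 2 + 2 * Complex.I * (f t : ℂ) * g t
      - Complex.I * (ε : ℂ) ^ 2 := fun t => by linear_combination hric t
  have hintc : Continuous (fun τ : ℝ => ((f τ : ℂ) + g τ)) :=
    (Complex.continuous_ofReal.comp hfc).add hgc
  have hRd : ∀ t, HasDerivAt R (-Complex.I * ((f t : ℂ) + g t) * R t) t := by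
    intro t
    rw [funext hR]
    have h := ((hintc.integral_hasStrictDerivAt 0 t).hasDerivAt.const_mul (-Complex.I)).cexp
    refine HasDerivAt.congr_deriv h (Eq.symm ?_)
    ring
  have hR0 : ∀ t, R t ≠ 0 := fun t => by rw [hR t]; exact Complex.exp_ne_zero _
  have hcR0 : ∀ t, (starRingEnd ℂ) (R t) ≠ 0 := fun t => by
    exact star_ne_zero.mpr (hR0 t)
  have hRc : Continuous R := by
    rw [funext hR]
    exact Complex.continuous_exp.comp (continuous_const.mul
      (intervalIntegral.continuous_primitive (fun a b => hintc.intervalIntegrable a b) 0))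
  have hScont : Continuous (fun τ : ℝ => ((R τ) ^ 2)⁻¹) :=
    (hRc.pow 2).inv₀ fun τ => pow_ne_zero _ (hR0 τ)
  have hSd : ∀ t, HasDerivAt S (((R t)⁻¹) ^ 2) t := by
    intro t
    rw [funext hS]
    have h := (hScont.integral_hasStrictDerivAt 0 t).hasDerivAt
    refine HasDerivAt.congr_deriv h (Eq.symm ?_)
    rw [inv_pow]
  have hRinvd : ∀ t, HasDerivAt (fun u => (R u)⁻¹)
      (Complex.I * ((f t : ℂ) + g t) * (R t)⁻¹) t := by
    intro t
    have h0 := (hasDerivAt_inv (hR0 t)).comp t (hRd t)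
    have h : HasDerivAt (fun u => (R u)⁻¹)
        (-((R t) ^ 2)⁻¹ * (-Complex.I * ((f t : ℂ) + g t) * R t)) t := h0
    convert h using 1
    field_simp [hR0 t]
  have hcRd : ∀ t, HasDerivAt (fun u => (starRingEnd ℂ) (R u))
      (Complex.I * ((f t : ℂ) + (starRingEnd ℂ) (g t)) * (starRingEnd ℂ) (R t)) t := by
    intro t
    have h := (hRd t).star
    have he : (star (-Complex.I * ((f t : ℂ) + g t) * R t) : ℂ)
        = Complex.I * ((f t : ℂ) + (starRingEnd ℂ) (g t)) * (starRingEnd ℂ) (R t) := by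
      simp only [← starRingEnd_apply, _root_.map_mul, _root_.map_add, map_neg,
        Complex.conj_I, Complex.conj_ofReal]
      ring
    rw [he] at h
    exact h
  have hcRinvd : ∀ t, HasDerivAt (fun u => ((starRingEnd ℂ) (R u))⁻¹)
      (-Complex.I * ((f t : ℂ) + (starRingEnd ℂ) (g t)) * ((starRingEnd ℂ) (R t))⁻¹) t := by
    intro t
    have h0 := (hasDerivAt_inv (hcR0 t)).comp t (hcRd t)
    have h : HasDerivAt (fun u => ((starRingEnd ℂ) (R u))⁻¹)
        (-(((starRingEnd ℂ) (R t)) ^ 2)⁻¹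
          * (Complex.I * ((f t : ℂ) + (starRingEnd ℂ) (g t)) * (starRingEnd ℂ) (R t))) t := h0
    convert h using 1
    field_simp [hcR0 t]
  have hcSd : ∀ t, HasDerivAt (fun u => (starRingEnd ℂ) (S u))
      ((((starRingEnd ℂ) (R t))⁻¹) ^ 2) t := by
    intro t
    have h := (hSd t).star
    have he : (star (((R t)⁻¹) ^ 2) : ℂ) = (((starRingEnd ℂ) (R t))⁻¹) ^ 2 := by
      simp only [← starRingEnd_apply, _root_.map_pow, map_inv₀]
    rw [he] at h
    exact h
  have hcgd : ∀ t, HasDerivAt (fun u => (starRingEnd ℂ) (g u))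
      ((starRingEnd ℂ) (deriv g t)) t := by
    intro t
    exact (hdg t).star
  have hcric : ∀ t, (starRingEnd ℂ) (deriv g t)
      = -Complex.I * ((starRingEnd ℂ) (g t)) ^ 2
        - 2 * Complex.I * (f t : ℂ) * (starRingEnd ℂ) (g t) + Complex.I * (ε : ℂ) ^ 2 := by
    intro t
    have h := congrArg (starRingEnd ℂ) (hric' t)
    simp only [_root_.map_add, map_sub, _root_.map_mul, _root_.map_pow, Complex.conj_I,
      Complex.conj_ofReal, map_ofNat] at h
    linear_combination h
  have hR00 : R 0 = 1 := by rw [hR 0]; simp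
  have hS00 : S 0 = 0 := by rw [hS 0]; simp
  have hI : (Complex.I) ^ 2 = -1 := Complex.I_sq
  have hRi : ∀ t, R t * (R t)⁻¹ = 1 := fun t => mul_inv_cancel₀ (hR0 t)
  have hcRi : ∀ t, (starRingEnd ℂ) (R t) * ((starRingEnd ℂ) (R t))⁻¹ = 1 :=
    fun t => mul_inv_cancel₀ (hcR0 t)
  -- derivative of P
  have hPd : ∀ t, HasDerivAt
      (fun u => -Complex.I * g u * R u + g u * g 0 * R u * S u
        + Complex.I * g 0 * (R u)⁻¹
        + (ε : ℂ) ^ 2 * (starRingEnd ℂ) (R u) * (starRingEnd ℂ) (S u))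
      (Complex.I * (f t : ℂ) * (-Complex.I * g t * R t + g t * g 0 * R t * S t
          + Complex.I * g 0 * (R t)⁻¹
          + (ε : ℂ) ^ 2 * (starRingEnd ℂ) (R t) * (starRingEnd ℂ) (S t))
        + Complex.I * (ε : ℂ) ^ 2 * ((starRingEnd ℂ) (g t) * (starRingEnd ℂ) (R t)
            * (starRingEnd ℂ) (S t)
          - Complex.I * ((starRingEnd ℂ) (R t))⁻¹ + Complex.I * R t - g 0 * R t * S t)) t := by
    intro t
    have raw := (((((hdg t).const_mul (-Complex.I)).mul (hRd t)).add
      ((((hdg t).mul_const (g 0)).mul (hRd t)).mul (hSd t))).add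
      ((hRinvd t).const_mul (Complex.I * g 0))).add
      (((hcRd t).const_mul ((ε : ℂ) ^ 2)).mul (hcSd t))
    refine HasDerivAt.congr_deriv raw (Eq.symm ?_)
    simp only [Pi.mul_apply]
    rw [hric' t]
    linear_combination ((-1:ℂ) * g t * g 0 * (R t)⁻¹ + (-1:ℂ) * (ε:ℂ)^2 * ((starRingEnd ℂ) (R t))⁻¹) * hI + ((-1:ℂ) * g t * g 0 * (R t)⁻¹) * hRi t + ((-1:ℂ) * (ε:ℂ)^2 * ((starRingEnd ℂ) (R t))⁻¹) * hcRi t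
  -- derivative of Q
  have hQd : ∀ t, HasDerivAt
      (fun u => (starRingEnd ℂ) (g u) * (starRingEnd ℂ) (R u) * (starRingEnd ℂ) (S u)
        - Complex.I * ((starRingEnd ℂ) (R u))⁻¹ + Complex.I * R u - g 0 * R u * S u)
      (Complex.I * (-Complex.I * g t * R t + g t * g 0 * R t * S t
          + Complex.I * g 0 * (R t)⁻¹
          + (ε : ℂ) ^ 2 * (starRingEnd ℂ) (R t) * (starRingEnd ℂ) (S t))
        - Complex.I * (f t : ℂ) * ((starRingEnd ℂ) (g t) * (starRingEnd ℂ) (R t)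
            * (starRingEnd ℂ) (S t)
          - Complex.I * ((starRingEnd ℂ) (R t))⁻¹ + Complex.I * R t - g 0 * R t * S t)) t := by
    intro t
    have raw := (((((hcgd t).mul (hcRd t)).mul (hcSd t)).sub
      ((hcRinvd t).const_mul Complex.I)).add
      ((hRd t).const_mul Complex.I)).sub
      (((hRd t).const_mul (g 0)).mul (hSd t))
    refine HasDerivAt.congr_deriv raw (Eq.symm ?_)
    simp only [Pi.mul_apply]
    rw [hcric t]
    linear_combination (g 0 * (R t)⁻¹ + (-1:ℂ) * (starRingEnd ℂ) (g t) * ((starRingEnd ℂ) (R t))⁻¹) * hI + (g 0 * (R t)⁻¹) * hRi t + ((-1:ℂ) * (starRingEnd ℂ) (g t) * ((starRingEnd ℂ) (R t))⁻¹) * hcRi t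
  -- Gronwall: P and Q vanish identically
  have hzero : ∀ t,
      (fun u => (-Complex.I * g u * R u + g u * g 0 * R u * S u
         + Complex.I * g 0 * (R u)⁻¹
         + (ε : ℂ) ^ 2 * (starRingEnd ℂ) (R u) * (starRingEnd ℂ) (S u),
        (starRingEnd ℂ) (g u) * (starRingEnd ℂ) (R u) * (starRingEnd ℂ) (S u)
         - Complex.I * ((starRingEnd ℂ) (R u))⁻¹ + Complex.I * R u - g 0 * R u * S u)) t
      = (0 : ℂ × ℂ) := by
    apply aux_zero _
      (fun t => (Complex.I * (f t : ℂ) * (-Complex.I * g t * R t + g t * g 0 * R t * S t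
          + Complex.I * g 0 * (R t)⁻¹
          + (ε : ℂ) ^ 2 * (starRingEnd ℂ) (R t) * (starRingEnd ℂ) (S t))
        + Complex.I * (ε : ℂ) ^ 2 * ((starRingEnd ℂ) (g t) * (starRingEnd ℂ) (R t)
            * (starRingEnd ℂ) (S t)
          - Complex.I * ((starRingEnd ℂ) (R t))⁻¹ + Complex.I * R t - g 0 * R t * S t),
        Complex.I * (-Complex.I * g t * R t + g t * g 0 * R t * S t
          + Complex.I * g 0 * (R t)⁻¹
          + (ε : ℂ) ^ 2 * (starRingEnd ℂ) (R t) * (starRingEnd ℂ) (S t))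
        - Complex.I * (f t : ℂ) * ((starRingEnd ℂ) (g t) * (starRingEnd ℂ) (R t)
            * (starRingEnd ℂ) (S t)
          - Complex.I * ((starRingEnd ℂ) (R t))⁻¹ + Complex.I * R t - g 0 * R t * S t)))
      (fun t => |f t| + ε ^ 2 + 1)
    · exact ((hfc.abs.add continuous_const).add continuous_const)
    · intro t
      exact (hPd t).prodMk (hQd t)
    · intro t
      set Pv := -Complex.I * g t * R t + g t * g 0 * R t * S t
          + Complex.I * g 0 * (R t)⁻¹
          + (ε : ℂ) ^ 2 * (starRingEnd ℂ) (R t) * (starRingEnd ℂ) (S t) with hPv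
      set Qv := (starRingEnd ℂ) (g t) * (starRingEnd ℂ) (R t) * (starRingEnd ℂ) (S t)
          - Complex.I * ((starRingEnd ℂ) (R t))⁻¹ + Complex.I * R t - g 0 * R t * S t with hQv
      have h1 : ‖Complex.I * (f t : ℂ) * Pv + Complex.I * (ε : ℂ) ^ 2 * Qv‖
          ≤ |f t| * ‖Pv‖ + ε ^ 2 * ‖Qv‖ := by
        calc ‖Complex.I * (f t : ℂ) * Pv + Complex.I * (ε : ℂ) ^ 2 * Qv‖
            ≤ ‖Complex.I * (f t : ℂ) * Pv‖ + ‖Complex.I * (ε : ℂ) ^ 2 * Qv‖ := norm_add_le _ _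
          _ = |f t| * ‖Pv‖ + ε ^ 2 * ‖Qv‖ := by
              simp [norm_mul, norm_pow, Complex.norm_I, Complex.norm_real,
                Real.norm_eq_abs, sq_abs]
      have h2 : ‖Complex.I * Pv - Complex.I * (f t : ℂ) * Qv‖
          ≤ ‖Pv‖ + |f t| * ‖Qv‖ := by
        calc ‖Complex.I * Pv - Complex.I * (f t : ℂ) * Qv‖
            ≤ ‖Complex.I * Pv‖ + ‖Complex.I * (f t : ℂ) * Qv‖ := norm_sub_le _ _
          _ = ‖Pv‖ + |f t| * ‖Qv‖ := by
              simp [norm_mul, Complex.norm_I, Complex.norm_real, Real.norm_eq_abs]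
      rw [Prod.norm_def, Prod.norm_def]
      simp only
      apply max_le
      · apply h1.trans
        have hp : ‖Pv‖ ≤ max ‖Pv‖ ‖Qv‖ := le_max_left _ _
        have hq : ‖Qv‖ ≤ max ‖Pv‖ ‖Qv‖ := le_max_right _ _
        nlinarith [abs_nonneg (f t), sq_nonneg ε, norm_nonneg Pv, norm_nonneg Qv,
          le_max_left ‖Pv‖ ‖Qv‖, le_max_right ‖Pv‖ ‖Qv‖]
      · apply h2.trans
        nlinarith [abs_nonneg (f t), sq_nonneg ε, norm_nonneg Pv, norm_nonneg Qv,
          le_max_left ‖Pv‖ ‖Qv‖, le_max_right ‖Pv‖ ‖Qv‖]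
    · simp only [hR00, hS00, Prod.mk_eq_zero]
      constructor
      · simp
      · simp
  have hPz : ∀ t, -Complex.I * g t * R t + g t * g 0 * R t * S t
      + Complex.I * g 0 * (R t)⁻¹
      + (ε : ℂ) ^ 2 * (starRingEnd ℂ) (R t) * (starRingEnd ℂ) (S t) = 0 := fun t => by
    have := congrArg Prod.fst (hzero t)
    simpa using this
  have hQz : ∀ t, (starRingEnd ℂ) (g t) * (starRingEnd ℂ) (R t) * (starRingEnd ℂ) (S t)
      - Complex.I * ((starRingEnd ℂ) (R t))⁻¹ + Complex.I * R t - g 0 * R t * S t = 0 :=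
    fun t => by
    have := congrArg Prod.snd (hzero t)
    simpa using this
  have hcPz : ∀ t, Complex.I * (starRingEnd ℂ) (g t) * (starRingEnd ℂ) (R t)
      + (starRingEnd ℂ) (g t) * (starRingEnd ℂ) (g 0) * (starRingEnd ℂ) (R t)
        * (starRingEnd ℂ) (S t)
      - Complex.I * (starRingEnd ℂ) (g 0) * ((starRingEnd ℂ) (R t))⁻¹
      + (ε : ℂ) ^ 2 * R t * S t = 0 := fun t => by
    have h := congrArg (starRingEnd ℂ) (hPz t)
    simp only [_root_.map_add, map_sub, _root_.map_mul, map_neg, map_inv₀, _root_.map_pow,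
      map_zero, Complex.conj_I, Complex.conj_ofReal, Complex.conj_conj] at h
    linear_combination h
  have hcQz : ∀ t, g t * R t * S t + Complex.I * (R t)⁻¹
      - Complex.I * (starRingEnd ℂ) (R t)
      - (starRingEnd ℂ) (g 0) * (starRingEnd ℂ) (R t) * (starRingEnd ℂ) (S t) = 0 :=
    fun t => by
    have h := congrArg (starRingEnd ℂ) (hQz t)
    simp only [_root_.map_add, map_sub, _root_.map_mul, map_neg, map_inv₀, _root_.map_pow,
      map_zero, Complex.conj_I, Complex.conj_ofReal, Complex.conj_conj] at h
    linear_combination h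
  -- entry derivatives
  have hA : ∀ t, HasDerivAt (fun u => R u * (1 + Complex.I * g 0 * S u))
      (-Complex.I * ((f t : ℂ) * (R t * (1 + Complex.I * g 0 * S t))
        + (ε : ℂ) * (-Complex.I * (ε : ℂ) * (starRingEnd ℂ) (R t) * (starRingEnd ℂ) (S t)))) t := by
    intro t
    have raw := (hRd t).mul (((hSd t).const_mul (Complex.I * g 0)).const_add 1)
    refine HasDerivAt.congr_deriv raw (Eq.symm ?_)
    linear_combination ((-1:ℂ)) * hPz t + (g t * g 0 * R t * S t + (ε:ℂ)^2 * (starRingEnd ℂ) (R t) * (starRingEnd ℂ) (S t)) * hI + ((-1:ℂ) * Complex.I * g 0 * (R t)⁻¹) * hRi t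
  have hB : ∀ t, HasDerivAt (fun u => -Complex.I * (ε : ℂ) * R u * S u)
      (-Complex.I * ((f t : ℂ) * (-Complex.I * (ε : ℂ) * R t * S t)
        + (ε : ℂ) * ((starRingEnd ℂ) (R t) * (1 - Complex.I * (starRingEnd ℂ) (g 0)
          * (starRingEnd ℂ) (S t))))) t := by
    intro t
    have raw := ((hRd t).const_mul (-Complex.I * (ε : ℂ))).mul (hSd t)
    refine HasDerivAt.congr_deriv raw (Eq.symm ?_)
    linear_combination ((ε:ℂ)) * hcQz t + ((ε:ℂ) * (starRingEnd ℂ) (g 0) * (starRingEnd ℂ) (R t) * (starRingEnd ℂ) (S t) + (-1:ℂ) * (ε:ℂ) * g t * R t * S t) * hI + (Complex.I * (ε:ℂ) * (R t)⁻¹) * hRi t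
  have hC : ∀ t, HasDerivAt
      (fun u => -Complex.I * (ε : ℂ) * (starRingEnd ℂ) (R u) * (starRingEnd ℂ) (S u))
      (-Complex.I * ((ε : ℂ) * (R t * (1 + Complex.I * g 0 * S t))
        - (f t : ℂ) * (-Complex.I * (ε : ℂ) * (starRingEnd ℂ) (R t)
          * (starRingEnd ℂ) (S t)))) t := by
    intro t
    have raw := ((hcRd t).const_mul (-Complex.I * (ε : ℂ))).mul (hcSd t)
    refine HasDerivAt.congr_deriv raw (Eq.symm ?_)
    linear_combination ((-1:ℂ) * (ε:ℂ)) * hQz t + ((-1:ℂ) * (ε:ℂ) * g 0 * R t * S t + (ε:ℂ) * (starRingEnd ℂ) (g t) * (starRingEnd ℂ) (R t) * (starRingEnd ℂ) (S t)) * hI + (Complex.I * (ε:ℂ) * ((starRingEnd ℂ) (R t))⁻¹) * hcRi t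
  have hD : ∀ t, HasDerivAt
      (fun u => (starRingEnd ℂ) (R u) * (1 - Complex.I * (starRingEnd ℂ) (g 0)
        * (starRingEnd ℂ) (S u)))
      (-Complex.I * ((ε : ℂ) * (-Complex.I * (ε : ℂ) * R t * S t)
        - (f t : ℂ) * ((starRingEnd ℂ) (R t) * (1 - Complex.I * (starRingEnd ℂ) (g 0)
          * (starRingEnd ℂ) (S t))))) t := by
    intro t
    have raw := (hcRd t).mul
      (((hcSd t).const_mul (Complex.I * (starRingEnd ℂ) (g 0))).const_sub 1)
    refine HasDerivAt.congr_deriv raw (Eq.symm ?_)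
    linear_combination ((-1:ℂ)) * hcPz t + ((starRingEnd ℂ) (g t) * (starRingEnd ℂ) (g 0) * (starRingEnd ℂ) (R t) * (starRingEnd ℂ) (S t) + (ε:ℂ)^2 * R t * S t) * hI + (Complex.I * (starRingEnd ℂ) (g 0) * ((starRingEnd ℂ) (R t))⁻¹) * hcRi t
  -- assembly
  have hΦf : Φ = fun u => (U u).mulVec Φ₀ := funext hΦ
  subst hΦf
  constructor
  · funext i
    fin_cases i <;>
      simp [hU 0, hR00, hS00, Matrix.mulVec, dotProduct, Fin.sum_univ_two]
  · intro t
    apply myHasDerivAt_pi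
    intro j
    fin_cases j
    · have hfun : (fun s => (U s).mulVec Φ₀ 0)
          = (fun u => R u * (1 + Complex.I * g 0 * S u) * Φ₀ 0
            + -Complex.I * (ε : ℂ) * R u * S u * Φ₀ 1) := by
        funext u
        rw [hU u]
        simp [Matrix.mulVec, dotProduct, Fin.sum_univ_two]
      show HasDerivAt (fun s => (U s).mulVec Φ₀ 0) _ t
      rw [hfun]
      have base := ((hA t).mul_const (Φ₀ 0)).add ((hB t).mul_const (Φ₀ 1))
      refine HasDerivAt.congr_deriv base (Eq.symm ?_)
      simp only [hU t]
      simp [Matrix.mulVec, dotProduct, Fin.sum_univ_two, Matrix.add_apply,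
        Matrix.smul_apply, smul_eq_mul, Pi.smul_apply]
      ring
    · have hfun : (fun s => (U s).mulVec Φ₀ 1)
          = (fun u => -Complex.I * (ε : ℂ) * (starRingEnd ℂ) (R u) * (starRingEnd ℂ) (S u) * Φ₀ 0
            + (starRingEnd ℂ) (R u) * (1 - Complex.I * (starRingEnd ℂ) (g 0)
              * (starRingEnd ℂ) (S u)) * Φ₀ 1) := by
        funext u
        rw [hU u]
        simp [Matrix.mulVec, dotProduct, Fin.sum_univ_two]
      show HasDerivAt (fun s => (U s).mulVec Φ₀ 1) _ t
      rw [hfun]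
      have base := ((hC t).mul_const (Φ₀ 0)).add ((hD t).mul_const (Φ₀ 1))
      refine HasDerivAt.congr_deriv base (Eq.symm ?_)
      simp only [hU t]
      simp [Matrix.mulVec, dotProduct, Fin.sum_univ_two, Matrix.add_apply,
        Matrix.smul_apply, smul_eq_mul, Pi.smul_apply]
      ring
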